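/- Let d ≥ 2, d' ≥ 2, d'' ≥ 2 be integers, A a strictly positive d' × d matrix and A' a strictly positive d'' × d' matrix. Then D(A·A') ≤ tanh(D(A)/4) · D(A'), where D denotes the Hilbert-metric diameter of the image of the nonzero nonnegative cone. -/

import Mathlib

/-- The Hilbert projective (pseudo)metric on strictly positive vectors. -/
noncomputable def hilbertTheta {m : Type*} [Fintype m] (x x' : m → ℝ) : ℝ :=
  Real.log (sInf {μ : ℝ | 0 < μ ∧ ∀ i, x' i ≤ μ * x i} /
    sSup {l : ℝ | 0 < l ∧ ∀ i, l * x i ≤ x' i})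

/-- The Hilbert-metric diameter of the image of the nonzero nonnegative cone. -/
noncomputable def hilbertDiam {m n : Type*} [Fintype m] [Fintype n]
    (A : Matrix m n ℝ) : ℝ :=
  sSup {t : ℝ | ∃ y y' : n → ℝ, (∀ j, 0 ≤ y j) ∧ y ≠ 0 ∧ (∀ j, 0 ≤ y' j) ∧ y' ≠ 0 ∧
    t = hilbertTheta (A.mulVec y) (A.mulVec y')}

set_option linter.unusedSectionVars false
set_option linter.unusedVariables false

namespace HB

variable {m n : Type*} [Fintype m] [Fintype n]

lemma sup_attained [Nonempty m] (f : m → ℝ) : ∃ i, (⨆ k, f k) = f i ∧ ∀ k, f k ≤ f i := by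
  obtain ⟨i, hi⟩ := Finite.exists_max f
  exact ⟨i, le_antisymm (ciSup_le hi) (le_ciSup (Finite.bddAbove_range f) i), hi⟩

lemma inf_attained [Nonempty m] (f : m → ℝ) : ∃ i, (⨅ k, f k) = f i ∧ ∀ k, f i ≤ f k := by
  obtain ⟨i, hi⟩ := Finite.exists_min f
  exact ⟨i, le_antisymm (ciInf_le (Finite.bddBelow_range f) i) (le_ciInf hi), hi⟩

lemma theta_eq [Nonempty m] {x x' : m → ℝ} (hx : ∀ i, 0 < x i) (hx' : ∀ i, 0 < x' i) :
    hilbertTheta x x' = Real.log (⨆ i, x' i / x i) - Real.log (⨅ i, x' i / x i) := by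
  obtain ⟨iM, hM, hMk⟩ := sup_attained (fun i => x' i / x i)
  obtain ⟨im, hm, hmk⟩ := inf_attained (fun i => x' i / x i)
  have hMpos : 0 < (⨆ i, x' i / x i) := hM ▸ div_pos (hx' iM) (hx iM)
  have hmpos : 0 < (⨅ i, x' i / x i) := hm ▸ div_pos (hx' im) (hx im)
  have hS1 : {μ : ℝ | 0 < μ ∧ ∀ i, x' i ≤ μ * x i} = Set.Ici (⨆ i, x' i / x i) := by
    ext μ
    simp only [Set.mem_setOf_eq, Set.mem_Ici]
    constructor
    · rintro ⟨hμ, h⟩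
      exact ciSup_le fun i => (div_le_iff₀ (hx i)).2 (h i)
    · intro h
      refine ⟨lt_of_lt_of_le hMpos h, fun i => ?_⟩
      have := (le_ciSup (Finite.bddAbove_range _) i).trans h
      exact (div_le_iff₀ (hx i)).1 this
  have hS2 : {l : ℝ | 0 < l ∧ ∀ i, l * x i ≤ x' i} = Set.Ioc 0 (⨅ i, x' i / x i) := by
    ext l
    simp only [Set.mem_setOf_eq, Set.mem_Ioc]
    constructor
    · rintro ⟨hl, h⟩
      exact ⟨hl, le_ciInf fun i => (le_div_iff₀ (hx i)).2 (h i)⟩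
    · rintro ⟨hl, h⟩
      refine ⟨hl, fun i => ?_⟩
      have := h.trans (ciInf_le (Finite.bddBelow_range _) i)
      exact (le_div_iff₀ (hx i)).1 this
  rw [hilbertTheta, hS1, hS2, csInf_Ici, csSup_Ioc hmpos,
    Real.log_div (ne_of_gt hMpos) (ne_of_gt hmpos)]

lemma theta_nonneg [Nonempty m] {x x' : m → ℝ} (hx : ∀ i, 0 < x i) (hx' : ∀ i, 0 < x' i) :
    0 ≤ hilbertTheta x x' := by
  rw [theta_eq hx hx', sub_nonneg]
  obtain ⟨im, hm, hmk⟩ := inf_attained (fun i => x' i / x i)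
  have hmpos : 0 < (⨅ i, x' i / x i) := hm ▸ div_pos (hx' im) (hx im)
  apply Real.log_le_log hmpos
  calc (⨅ i, x' i / x i) ≤ x' im / x im := hm.le
    _ ≤ ⨆ i, x' i / x i := le_ciSup (Finite.bddAbove_range fun i => x' i / x i) im

lemma mulVec_pos [Nonempty n] (A : Matrix m n ℝ) (hA : ∀ i j, 0 < A i j)
    {y : n → ℝ} (hy : ∀ j, 0 ≤ y j) (hy0 : y ≠ 0) (i : m) : 0 < A.mulVec y i := by
  obtain ⟨j0, hj0⟩ : ∃ j, y j ≠ 0 := by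
    by_contra h
    push_neg at h
    exact hy0 (funext h)
  have hj0' : 0 < y j0 := lt_of_le_of_ne (hy j0) (Ne.symm hj0)
  apply Finset.sum_pos' (fun j _ => mul_nonneg (hA i j).le (hy j))
  exact ⟨j0, Finset.mem_univ j0, mul_pos (hA i j0) hj0'⟩

end HB



namespace HB
variable {m n : Type*} [Fintype m] [Fintype n]

lemma poly_ineq (x σ t : ℝ) (hx : 1 ≤ x) (hσ : 1 ≤ σ) (ht : 0 ≤ t) :
    (x^2*σ^2*t+1)*(t+1)*(x+σ)^2 ≤ (x*σ+1)^2*(σ^2*t+1)*(x^2*t+1) := by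
  nlinarith [sq_nonneg (x*σ*t-1), sq_nonneg x, sq_nonneg σ,
    mul_nonneg (mul_nonneg (by nlinarith : (0:ℝ) ≤ x^2-1) (by nlinarith : (0:ℝ) ≤ σ^2-1))
      (sq_nonneg (x*σ*t-1))]

lemma hasDeriv_F (σ : ℝ) (hσ : 1 ≤ σ) (y : ℝ) (hy : 0 < y) :
    HasDerivAt (fun y => (σ-1)/(σ+1) * Real.log y + Real.log (y+σ) - Real.log (y*σ+1))
      ((σ-1)/(σ+1) * y⁻¹ + 1/(y+σ) - σ/(y*σ+1)) y := by
  have hσ0 : (0:ℝ) < σ := by linarith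
  have h1 : HasDerivAt Real.log y⁻¹ y := Real.hasDerivAt_log hy.ne'
  have h2 : HasDerivAt (fun y : ℝ => Real.log (y+σ)) (1/(y+σ)) y := by
    have ha : HasDerivAt (fun y : ℝ => y + σ) 1 y := (hasDerivAt_id y).add_const σ
    have := (Real.hasDerivAt_log (by positivity : y + σ ≠ 0)).comp y ha
    simpa [one_div, Function.comp_def] using this
  have h3 : HasDerivAt (fun y : ℝ => Real.log (y*σ+1)) (σ/(y*σ+1)) y := by
    have ha : HasDerivAt (fun y : ℝ => y * σ + 1) σ y := by
      simpa using ((hasDerivAt_id y).mul_const σ).add_const 1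
    have hne : y * σ + 1 ≠ 0 := by positivity
    have := (Real.hasDerivAt_log hne).comp y ha
    simpa [div_eq_inv_mul, Function.comp_def] using this
  exact ((h1.const_mul _).add h2).sub h3

lemma log_ineq {σ x : ℝ} (hσ : 1 ≤ σ) (hx : 1 ≤ x) :
    Real.log ((x*σ+1)/(x+σ)) ≤ (σ-1)/(σ+1) * Real.log x := by
  set F : ℝ → ℝ := fun y => (σ-1)/(σ+1) * Real.log y + Real.log (y+σ) - Real.log (y*σ+1)
    with hF
  have hσ0 : (0:ℝ) < σ := by linarith
  have hmono : MonotoneOn F (Set.Ici 1) := by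
    apply monotoneOn_of_deriv_nonneg (convex_Ici 1)
    · intro y hy
      have hy1 : (1:ℝ) ≤ y := hy
      exact (hasDeriv_F σ hσ y (by linarith)).continuousAt.continuousWithinAt
    · intro y hy
      rw [interior_Ici] at hy
      have hy1 : (1:ℝ) < y := hy
      exact (hasDeriv_F σ hσ y (by linarith)).differentiableAt.differentiableWithinAt
    · intro y hy
      rw [interior_Ici] at hy
      have hy1 : (1:ℝ) < y := hy
      have hy0 : (0:ℝ) < y := by linarith
      rw [(hasDeriv_F σ hσ y hy0).deriv]
      have heq : (σ-1)/(σ+1) * y⁻¹ + 1/(y+σ) - σ/(y*σ+1)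
          = (σ*(σ-1)*(y-1)^2)/((σ+1)*y*(y+σ)*(y*σ+1)) := by
        field_simp
        ring
      rw [heq]
      apply div_nonneg
      · exact mul_nonneg (mul_nonneg hσ0.le (by linarith)) (sq_nonneg _)
      · positivity
  have hF1 : F 1 = 0 := by
    simp only [hF, Real.log_one, mul_zero, one_mul]
    rw [add_comm (1:ℝ) σ]
    ring
  have h := hmono (by norm_num : (1:ℝ) ∈ Set.Ici 1) (by exact hx : x ∈ Set.Ici 1) hx
  rw [hF1] at h
  have hxσ : (0:ℝ) < x + σ := by linarith
  have hxσ1 : (0:ℝ) < x * σ + 1 := by nlinarith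
  rw [Real.log_div hxσ1.ne' hxσ.ne']
  simp only [hF] at h
  linarith

lemma tanh_formula (Δ : ℝ) :
    Real.tanh (Δ/4) = (Real.exp (Δ/2) - 1)/(Real.exp (Δ/2) + 1) := by
  rw [Real.tanh_eq_sinh_div_cosh, Real.sinh_eq, Real.cosh_eq]
  have h : Real.exp (Δ/2) = Real.exp (Δ/4) * Real.exp (Δ/4) := by
    rw [← Real.exp_add]; ring_nf
  rw [h, Real.exp_neg]
  have hp := Real.exp_pos (Δ/4)
  have hp2 : (0:ℝ) < Real.exp (Δ/4) * Real.exp (Δ/4) + 1 := by positivity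
  field_simp

lemma frac_mono {σ E : ℝ} (hσ : 1 ≤ σ) (hE : σ ≤ E) : (σ-1)/(σ+1) ≤ (E-1)/(E+1) := by
  have h1 : (0:ℝ) < σ+1 := by linarith
  have h2 : (0:ℝ) < E+1 := by linarith
  rw [div_le_div_iff₀ h1 h2]
  nlinarith

lemma ratio_bound2 (a x σ t : ℝ) (ha : 0 < a) (hx : 1 ≤ x) (hσ : 1 ≤ σ) (ht : 0 < t) :
    (a*x^2*(σ^2*t)+a)/(σ^2*t+1) ≤ ((x*σ+1)/(x+σ))^2 * ((a*x^2*t+a)/(t+1)) := by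
  have h1 : (0:ℝ) < x+σ := by linarith
  have h2 : (0:ℝ) < x*σ+1 := by nlinarith
  have key := poly_ineq x σ t hx hσ ht.le
  rw [div_pow, div_mul_div_comm, div_le_div_iff₀ (by positivity) (by positivity)]
  calc (a*x^2*(σ^2*t)+a) * ((x+σ)^2*(t+1))
      = a * ((x^2*σ^2*t+1)*(t+1)*(x+σ)^2) := by ring
    _ ≤ a * ((x*σ+1)^2*(σ^2*t+1)*(x^2*t+1)) := mul_le_mul_of_nonneg_left key ha.le
    _ = (x*σ+1)^2*(a*x^2*t+a) * (σ^2*t+1) := by ring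

lemma ratio_le [Nonempty m] [Nonempty n] (A : Matrix m n ℝ) (hA : ∀ i j, 0 < A i j)
    {y y' : n → ℝ} (hy : ∀ j, 0 ≤ y j) (hy0 : y ≠ 0) (hy' : ∀ j, 0 ≤ y' j) (hy0' : y' ≠ 0) :
    hilbertTheta (A.mulVec y) (A.mulVec y') ≤
      Real.log ((⨆ p : m × m × n, A p.1 p.2.2 / A p.2.1 p.2.2)^2) := by
  set K := ⨆ p : m × m × n, A p.1 p.2.2 / A p.2.1 p.2.2 with hKdef
  have hKmem : ∀ i k j, A i j / A k j ≤ K := fun i k j =>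
    le_ciSup (Finite.bddAbove_range fun p : m × m × n => A p.1 p.2.2 / A p.2.1 p.2.2) (⟨i, k, j⟩ : m × m × n)
  have i0 : m := Classical.arbitrary m
  have j0 : n := Classical.arbitrary n
  have hK1 : 1 ≤ K := by
    have := hKmem i0 i0 j0
    rwa [div_self (hA i0 j0).ne'] at this
  have hK0 : (0:ℝ) < K := by linarith
  have hAK : ∀ i k j, A i j ≤ K * A k j := fun i k j => (div_le_iff₀ (hA k j)).1 (hKmem i k j)
  have hsum : ∀ (w : n → ℝ), (∀ j, 0 ≤ w j) → ∀ i k, A.mulVec w i ≤ K * A.mulVec w k := by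
    intro w hw i k
    simp only [Matrix.mulVec, dotProduct, Finset.mul_sum]
    apply Finset.sum_le_sum
    intro j _
    rw [← mul_assoc]
    exact mul_le_mul_of_nonneg_right (hAK i k j) (hw j)
  have hu := fun i => mulVec_pos A hA hy hy0 i
  have hu' := fun i => mulVec_pos A hA hy' hy0' i
  have hrat : ∀ i k, A.mulVec y' i / A.mulVec y i ≤ K^2 * (A.mulVec y' k / A.mulVec y k) := by
    intro i k
    rw [div_le_iff₀ (hu i)]
    calc A.mulVec y' i ≤ K * A.mulVec y' k := hsum y' hy' i k
      _ = K * ((A.mulVec y' k / A.mulVec y k) * A.mulVec y k) := by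
          rw [div_mul_cancel₀ _ (hu k).ne']
      _ ≤ K * ((A.mulVec y' k / A.mulVec y k) * (K * A.mulVec y i)) := by
          have hr : 0 ≤ A.mulVec y' k / A.mulVec y k := (div_pos (hu' k) (hu k)).le
          have := hsum y hy k i
          exact mul_le_mul_of_nonneg_left (mul_le_mul_of_nonneg_left this hr) hK0.le
      _ = K^2 * (A.mulVec y' k / A.mulVec y k) * A.mulVec y i := by ring
  obtain ⟨im, hm, hmk⟩ := inf_attained (fun i => A.mulVec y' i / A.mulVec y i)
  have hmpos : 0 < ⨅ i, A.mulVec y' i / A.mulVec y i := hm ▸ div_pos (hu' im) (hu im)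
  have hMpos : 0 < ⨆ i, A.mulVec y' i / A.mulVec y i := by
    calc (0:ℝ) < A.mulVec y' im / A.mulVec y im := div_pos (hu' im) (hu im)
      _ ≤ _ := le_ciSup (Finite.bddAbove_range fun i => A.mulVec y' i / A.mulVec y i) im
  have hsup : (⨆ i, A.mulVec y' i / A.mulVec y i)
      ≤ K^2 * (⨅ i, A.mulVec y' i / A.mulVec y i) := by
    apply ciSup_le
    intro i
    rw [hm]
    exact hrat i im
  rw [theta_eq hu hu']
  have hlog := Real.log_le_log hMpos hsup
  rw [Real.log_mul (by positivity) hmpos.ne'] at hlog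
  linarith

lemma diam_bddAbove [Nonempty m] [Nonempty n] (A : Matrix m n ℝ) (hA : ∀ i j, 0 < A i j) :
    BddAbove {t : ℝ | ∃ y y' : n → ℝ, (∀ j, 0 ≤ y j) ∧ y ≠ 0 ∧ (∀ j, 0 ≤ y' j) ∧ y' ≠ 0 ∧
      t = hilbertTheta (A.mulVec y) (A.mulVec y')} := by
  refine ⟨Real.log ((⨆ p : m × m × n, A p.1 p.2.2 / A p.2.1 p.2.2)^2), ?_⟩
  rintro t ⟨y, y', hy, hy0, hy', hy0', rfl⟩
  exact ratio_le A hA hy hy0 hy' hy0'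

lemma one_ne_zero' [Nonempty n] : (fun _ : n => (1:ℝ)) ≠ 0 := by
  intro h
  have := congrFun h (Classical.arbitrary n)
  norm_num at this

lemma zero_mem_diamSet [Nonempty m] [Nonempty n] (A : Matrix m n ℝ) (hA : ∀ i j, 0 < A i j) :
    (0:ℝ) ∈ {t : ℝ | ∃ y y' : n → ℝ, (∀ j, 0 ≤ y j) ∧ y ≠ 0 ∧ (∀ j, 0 ≤ y' j) ∧ y' ≠ 0 ∧
      t = hilbertTheta (A.mulVec y) (A.mulVec y')} := by
  refine ⟨(fun _ => 1), (fun _ => 1), fun _ => zero_le_one, one_ne_zero',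
    fun _ => zero_le_one, one_ne_zero', ?_⟩
  have hu := fun i => mulVec_pos A hA (fun _ : n => zero_le_one) one_ne_zero' i
  rw [theta_eq hu hu]
  have : ∀ i, A.mulVec (fun _ => (1:ℝ)) i / A.mulVec (fun _ => (1:ℝ)) i = 1 :=
    fun i => div_self (hu i).ne'
  simp [this]

lemma diam_nonneg [Nonempty m] [Nonempty n] (A : Matrix m n ℝ) (hA : ∀ i j, 0 < A i j) :
    0 ≤ hilbertDiam A :=
  le_csSup (diam_bddAbove A hA) (zero_mem_diamSet A hA)

lemma theta_le_diam [Nonempty m] [Nonempty n] (A : Matrix m n ℝ) (hA : ∀ i j, 0 < A i j)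
    {y y' : n → ℝ} (hy : ∀ j, 0 ≤ y j) (hy0 : y ≠ 0) (hy' : ∀ j, 0 ≤ y' j) (hy0' : y' ≠ 0) :
    hilbertTheta (A.mulVec y) (A.mulVec y') ≤ hilbertDiam A :=
  le_csSup (diam_bddAbove A hA) ⟨y, y', hy, hy0, hy', hy0', rfl⟩

lemma birkhoff [Nonempty m] [Nonempty n] (A : Matrix m n ℝ) (hA : ∀ i j, 0 < A i j)
    {Δ : ℝ} (hΔ0 : 0 ≤ Δ)
    (hΔ : ∀ u u' : n → ℝ, (∀ j, 0 ≤ u j) → u ≠ 0 → (∀ j, 0 ≤ u' j) → u' ≠ 0 →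
      hilbertTheta (A.mulVec u) (A.mulVec u') ≤ Δ)
    {x x' : n → ℝ} (hx : ∀ j, 0 < x j) (hx' : ∀ j, 0 < x' j) :
    hilbertTheta (A.mulVec x) (A.mulVec x') ≤ Real.tanh (Δ/4) * hilbertTheta x x' := by
  have htanh0 : 0 ≤ Real.tanh (Δ/4) := by
    rw [tanh_formula]
    have := Real.one_le_exp (by linarith : 0 ≤ Δ/2)
    apply div_nonneg <;> linarith
  obtain ⟨jM, hβs, hβk⟩ := sup_attained (fun j => x' j / x j)
  obtain ⟨jm, hαs, hαk⟩ := inf_attained (fun j => x' j / x j)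
  set β := x' jM / x jM with hβdef
  set α := x' jm / x jm with hαdef
  have hα0 : 0 < α := div_pos (hx' jm) (hx jm)
  have hβ0 : 0 < β := div_pos (hx' jM) (hx jM)
  have hαβ : α ≤ β := hαk jM
  clear_value β α
  have hxne : x ≠ 0 := fun h => (hx (Classical.arbitrary n)).ne' (congrFun h _)
  have hx'ne : x' ≠ 0 := fun h => (hx' (Classical.arbitrary n)).ne' (congrFun h _)
  have hAx : ∀ i, 0 < A.mulVec x i := mulVec_pos A hA (fun j => (hx j).le) hxne
  have hAx' : ∀ i, 0 < A.mulVec x' i := mulVec_pos A hA (fun j => (hx' j).le) hx'ne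
  have hΘxx : hilbertTheta x x' = Real.log β - Real.log α := by
    rw [theta_eq hx hx', hβs, hαs]
  have hΘxx0 : 0 ≤ hilbertTheta x x' := theta_nonneg hx hx'
  rcases eq_or_lt_of_le hαβ with heq | hlt
  · -- degenerate case: all ratios equal
    have hxx : ∀ j, x' j = α * x j := by
      intro j
      have h1 : α ≤ x' j / x j := hαk j
      have h2 : x' j / x j ≤ β := hβk j
      have h3 : x' j / x j = α := le_antisymm (heq ▸ h2) h1
      exact (div_eq_iff (hx j).ne').1 h3
    have hAxx' : A.mulVec x' = α • A.mulVec x := by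
      have hx'eq : x' = α • x := funext fun j => by rw [hxx j]; rfl
      rw [hx'eq, Matrix.mulVec_smul]
    have hΘ1 : hilbertTheta (A.mulVec x) (A.mulVec x') = 0 := by
      rw [theta_eq hAx hAx']
      have hr : ∀ i, A.mulVec x' i / A.mulVec x i = α := by
        intro i
        rw [hAxx', Pi.smul_apply, smul_eq_mul, mul_div_assoc, div_self (hAx i).ne', mul_one]
      rw [show (⨆ i, A.mulVec x' i / A.mulVec x i) = α by simp only [hr, ciSup_const],
        show (⨅ i, A.mulVec x' i / A.mulVec x i) = α by simp only [hr, ciInf_const], sub_self]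
    rw [hΘ1, hΘxx, ← heq, sub_self, mul_zero]
  · -- main case
    set w : n → ℝ := fun j => x' j - α * x j with hwdef
    set z : n → ℝ := fun j => β * x j - x' j with hzdef
    have hw0 : ∀ j, 0 ≤ w j := by
      intro j
      have h1 := (le_div_iff₀ (hx j)).1 (hαk j)
      simp only [hwdef]
      linarith
    have hz0 : ∀ j, 0 ≤ z j := by
      intro j
      have h1 := (div_le_iff₀ (hx j)).1 (hβk j)
      simp only [hzdef]
      linarith
    have hwne : w ≠ 0 := by
      intro h
      have h0 : w jM = 0 := congrFun h jM
      have hxj : x' jM = β * x jM := (div_eq_iff (hx jM).ne').1 hβdef.symm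
      simp only [hwdef, hxj] at h0
      nlinarith [hx jM]
    have hzne : z ≠ 0 := by
      intro h
      have h0 : z jm = 0 := congrFun h jm
      have hxj : x' jm = α * x jm := (div_eq_iff (hx jm).ne').1 hαdef.symm
      simp only [hzdef, hxj] at h0
      nlinarith [hx jm]
    clear_value w z
    set u := A.mulVec w with hudef
    set v := A.mulVec z with hvdef
    have hu : ∀ i, 0 < u i := mulVec_pos A hA hw0 hwne
    have hv : ∀ i, 0 < v i := mulVec_pos A hA hz0 hzne
    clear_value u v
    have hβα : 0 < β - α := sub_pos.2 hlt
    have huv : ∀ i, u i + v i = (β - α) * A.mulVec x i := by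
      intro i
      have h1 : w + z = (β - α) • x := funext fun j => by
        simp only [Pi.add_apply, hwdef, hzdef, Pi.smul_apply, smul_eq_mul]
        ring
      calc u i + v i = A.mulVec (w + z) i := by
            rw [hudef, hvdef, Matrix.mulVec_add]; rfl
        _ = (β - α) * A.mulVec x i := by
            rw [h1, Matrix.mulVec_smul]
            simp
    have huv' : ∀ i, β * u i + α * v i = (β - α) * A.mulVec x' i := by
      intro i
      have h1 : β • w + α • z = (β - α) • x' := funext fun j => by
        simp only [Pi.add_apply, hwdef, hzdef, Pi.smul_apply, smul_eq_mul]
        ring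
      calc β * u i + α * v i = A.mulVec (β • w + α • z) i := by
            rw [hudef, hvdef, Matrix.mulVec_add, Matrix.mulVec_smul, Matrix.mulVec_smul]
            simp
        _ = (β - α) * A.mulVec x' i := by
            rw [h1, Matrix.mulVec_smul]
            simp
    set t : m → ℝ := fun i => u i / v i with htdef
    have ht0 : ∀ i, 0 < t i := fun i => div_pos (hu i) (hv i)
    clear_value t
    have hP : ∀ i, A.mulVec x' i / A.mulVec x i = (β * t i + α) / (t i + 1) := by
      intro i
      have e1 : A.mulVec x' i / A.mulVec x i = (β * u i + α * v i) / (u i + v i) := by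
        rw [huv' i, huv i, mul_div_mul_left _ _ hβα.ne']
      have e2 : (β * u i + α * v i) / (u i + v i) = (β * t i + α) / (t i + 1) := by
        have hvne := (hv i).ne'
        have huvne : u i + v i ≠ 0 := ne_of_gt (by linarith [hu i, hv i])
        have htne : t i + 1 ≠ 0 := ne_of_gt (by linarith [ht0 i])
        rw [div_eq_div_iff huvne htne]
        simp only [htdef]
        field_simp
      rw [e1, e2]
    obtain ⟨iM, hiM⟩ := Finite.exists_max t
    obtain ⟨im, him⟩ := Finite.exists_min t
    have hmono : ∀ {s r : ℝ}, 0 < s → s ≤ r → (β*s+α)/(s+1) ≤ (β*r+α)/(r+1) := by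
      intro s r hs hsr
      rw [div_le_div_iff₀ (by linarith) (by linarith)]
      nlinarith [mul_nonneg (sub_nonneg.2 hsr) (sub_nonneg.2 hαβ)]
    have hsupP : (⨆ i, A.mulVec x' i / A.mulVec x i) = (β * t iM + α)/(t iM + 1) := by
      apply le_antisymm
      · apply ciSup_le
        intro i
        rw [hP i]
        exact hmono (ht0 i) (hiM i)
      · rw [← hP iM]
        exact le_ciSup (Finite.bddAbove_range fun i => A.mulVec x' i / A.mulVec x i) iM
    have hinfP : (⨅ i, A.mulVec x' i / A.mulVec x i) = (β * t im + α)/(t im + 1) := by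
      apply le_antisymm
      · rw [← hP im]
        exact ciInf_le (Finite.bddBelow_range fun i => A.mulVec x' i / A.mulVec x i) im
      · apply le_ciInf
        intro i
        rw [hP i]
        exact hmono (ht0 im) (him i)
    -- contraction input: hilbertTheta u v ≤ Δ
    have hthuv := hΔ w z hw0 hwne hz0 hzne
    rw [← hudef, ← hvdef, theta_eq hu hv] at hthuv
    have hq : ∀ i k, t i ≤ t k → v k / u k ≤ v i / u i := by
      intro i k hik
      simp only [htdef] at hik
      rw [div_le_div_iff₀ (hu k) (hu i)]
      have h1 := (div_le_div_iff₀ (hv i) (hv k)).1 hik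
      linarith
    have hsupq : (⨆ i, v i / u i) = v im / u im := by
      apply le_antisymm
      · exact ciSup_le fun k => hq im k (him k)
      · exact le_ciSup (Finite.bddAbove_range fun i => v i / u i) im
    have hinfq : (⨅ i, v i / u i) = v iM / u iM := by
      apply le_antisymm
      · exact ciInf_le (Finite.bddBelow_range fun i => v i / u i) iM
      · exact le_ciInf fun k => hq k iM (hiM k)
    rw [hsupq, hinfq] at hthuv
    have einv : ∀ i, v i / u i = (t i)⁻¹ := by
      intro i
      simp only [htdef]
      rw [inv_div]
    rw [einv im, einv iM, Real.log_inv, Real.log_inv] at hthuv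
    -- now hthuv : -log (t im) - -log (t iM) ≤ Δ, i.e. log t iM - log t im ≤ Δ
    have hts : t iM ≤ Real.exp Δ * t im := by
      have h1 : Real.log (t iM) ≤ Δ + Real.log (t im) := by linarith
      have h2 := Real.exp_le_exp.2 h1
      rwa [Real.exp_log (ht0 iM), Real.exp_add, Real.exp_log (ht0 im)] at h2
    set s := t iM / t im with hsdef
    have hs1 : 1 ≤ s := (one_le_div (ht0 im)).2 (him iM)
    have hsΔ : s ≤ Real.exp Δ := (div_le_iff₀ (ht0 im)).2 hts
    clear_value s
    set σ := Real.sqrt s with hσdef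
    have hσ1 : 1 ≤ σ := by
      rw [hσdef, show (1:ℝ) = Real.sqrt 1 by rw [Real.sqrt_one]]
      exact Real.sqrt_le_sqrt hs1
    have hσ2 : σ^2 = s := Real.sq_sqrt (by linarith)
    clear_value σ
    set x₀ := Real.sqrt (β/α) with hx₀def
    have hba1 : 1 ≤ β/α := (one_le_div hα0).2 hαβ
    have hx₀1 : 1 ≤ x₀ := by
      rw [hx₀def, show (1:ℝ) = Real.sqrt 1 by rw [Real.sqrt_one]]
      exact Real.sqrt_le_sqrt hba1
    have hx₀2 : x₀^2 = β/α := Real.sq_sqrt (by linarith)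
    clear_value x₀
    have hβeq : β = α * x₀^2 := by rw [hx₀2]; field_simp
    have htiM : t iM = σ^2 * t im := by
      rw [hσ2, hsdef, div_mul_cancel₀ _ (ht0 im).ne']
    have hxσ : (0:ℝ) < x₀ + σ := by linarith
    have hxσ1 : (0:ℝ) < x₀*σ+1 := by
      have h1 : (0:ℝ) < x₀*σ := mul_pos (by linarith) (by linarith)
      linarith
    have hKbound : (β * t iM + α)/(t iM + 1)
        ≤ ((x₀*σ+1)/(x₀+σ))^2 * ((β * t im + α)/(t im + 1)) := by
      rw [htiM, hβeq]
      exact ratio_bound2 α x₀ σ (t im) hα0 hx₀1 hσ1 (ht0 im)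
    have hPiM : (0:ℝ) < (β * t iM + α)/(t iM + 1) :=
      div_pos (add_pos (mul_pos hβ0 (ht0 iM)) hα0) (by linarith [ht0 iM])
    have hPim : (0:ℝ) < (β * t im + α)/(t im + 1) :=
      div_pos (add_pos (mul_pos hβ0 (ht0 im)) hα0) (by linarith [ht0 im])
    rw [theta_eq hAx hAx', hsupP, hinfP]
    have hlog1 : Real.log ((β*t iM+α)/(t iM+1)) - Real.log ((β*t im+α)/(t im+1))
        ≤ 2 * Real.log ((x₀*σ+1)/(x₀+σ)) := by
      have h1 := Real.log_le_log hPiM hKbound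
      rw [Real.log_mul (pow_pos (div_pos hxσ1 hxσ) 2).ne' hPim.ne', Real.log_pow] at h1
      push_cast at h1
      linarith
    have hlog2 : Real.log ((x₀*σ+1)/(x₀+σ)) ≤ (σ-1)/(σ+1) * Real.log x₀ :=
      log_ineq hσ1 hx₀1
    have hlogx₀ : 2 * Real.log x₀ = Real.log β - Real.log α := by
      have h1 : Real.log (x₀^2) = Real.log (β/α) := by rw [hx₀2]
      rw [Real.log_pow, Real.log_div hβ0.ne' hα0.ne'] at h1
      push_cast at h1
      linarith
    have hσE : σ ≤ Real.exp (Δ/2) := by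
      rw [hσdef, Real.exp_half]
      exact Real.sqrt_le_sqrt hsΔ
    have hfrac : (σ-1)/(σ+1) ≤ Real.tanh (Δ/4) := by
      rw [tanh_formula]
      exact frac_mono hσ1 hσE
    have hlogx₀0 : 0 ≤ Real.log x₀ := Real.log_nonneg hx₀1
    calc Real.log ((β*t iM+α)/(t iM+1)) - Real.log ((β*t im+α)/(t im+1))
        ≤ 2 * Real.log ((x₀*σ+1)/(x₀+σ)) := hlog1
      _ ≤ 2 * ((σ-1)/(σ+1) * Real.log x₀) := by linarith
      _ = (σ-1)/(σ+1) * (2 * Real.log x₀) := by ring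
      _ = (σ-1)/(σ+1) * (Real.log β - Real.log α) := by rw [hlogx₀]
      _ = (σ-1)/(σ+1) * hilbertTheta x x' := by rw [hΘxx]
      _ ≤ Real.tanh (Δ/4) * hilbertTheta x x' := mul_le_mul_of_nonneg_right hfrac hΘxx0

end HB

theorem stmt_11 (d d' d'' : ℕ) (hd : 2 ≤ d) (hd' : 2 ≤ d') (hd'' : 2 ≤ d'')
    (A : Matrix (Fin d) (Fin d') ℝ) (A' : Matrix (Fin d') (Fin d'') ℝ)
    (hA : ∀ i j, 0 < A i j) (hA' : ∀ i j, 0 < A' i j) :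
    hilbertDiam (A * A') ≤ Real.tanh (hilbertDiam A / 4) * hilbertDiam A' := by
  haveI : Nonempty (Fin d) := ⟨⟨0, by omega⟩⟩
  haveI : Nonempty (Fin d') := ⟨⟨0, by omega⟩⟩
  haveI : Nonempty (Fin d'') := ⟨⟨0, by omega⟩⟩
  have hAA' : ∀ i j, 0 < (A * A') i j := by
    intro i j
    rw [Matrix.mul_apply]
    exact Finset.sum_pos (fun k _ => mul_pos (hA i k) (hA' k j)) Finset.univ_nonempty
  have hDA0 : 0 ≤ hilbertDiam A := HB.diam_nonneg A hA
  have htanh0 : 0 ≤ Real.tanh (hilbertDiam A / 4) := by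
    rw [HB.tanh_formula]
    have := Real.one_le_exp (by linarith : 0 ≤ hilbertDiam A / 2)
    apply div_nonneg <;> linarith
  refine csSup_le ⟨0, HB.zero_mem_diamSet (A * A') hAA'⟩ ?_
  rintro b ⟨y, y', hy, hy0, hy', hy0', rfl⟩
  rw [show (A * A').mulVec y = A.mulVec (A'.mulVec y) from (Matrix.mulVec_mulVec ..).symm,
      show (A * A').mulVec y' = A.mulVec (A'.mulVec y') from (Matrix.mulVec_mulVec ..).symm]
  have hx : ∀ j, 0 < A'.mulVec y j := HB.mulVec_pos A' hA' hy hy0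
  have hx' : ∀ j, 0 < A'.mulVec y' j := HB.mulVec_pos A' hA' hy' hy0'
  have hb := HB.birkhoff A hA hDA0
    (fun u u' hu hu0 hu' hu0' => HB.theta_le_diam A hA hu hu0 hu' hu0') hx hx'
  refine hb.trans ?_
  exact mul_le_mul_of_nonneg_left (HB.theta_le_diam A' hA' hy hy0 hy' hy0') htanh0
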